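/- Let Z_1,...,Z_{n+1} be exchangeable real-valued random variables with almost surely no ties. Then for any β ∈ (0,1), the probability that the rank of Z_{n+1} among Z_1,...,Z_{n+1} is at most ⌈β(n+1)⌉ is at least β. -/
import Mathlib
open MeasureTheory Finset

namespace ConformalAux

noncomputable def rk {n : ℕ} (v : Fin n → ℝ) (j : Fin n) : ℕ :=
  (univ.filter fun i => v i ≤ v j).card

lemma rk_lt {n : ℕ} {v : Fin n → ℝ} {j j' : Fin n}
    (h : v j < v j') : rk v j < rk v j' := by
  apply Finset.card_lt_card
  constructor
  · intro i hi
    simp only [mem_filter, mem_univ, true_and] at *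
    exact hi.trans h.le
  · intro hsub
    have := hsub (by simp : j' ∈ univ.filter fun i => v i ≤ v j')
    simp only [mem_filter, mem_univ, true_and] at this
    exact absurd this (not_le.mpr h)

lemma rk_inj {n : ℕ} {v : Fin n → ℝ} (hv : Function.Injective v) :
    Function.Injective (rk v) := by
  intro a b hab
  by_contra hne
  rcases lt_trichotomy (v a) (v b) with h | h | h
  · exact absurd hab (rk_lt h).ne
  · exact hne (hv h)
  · exact absurd hab.symm (rk_lt h).ne

lemma rk_image {n : ℕ} {v : Fin (n+1) → ℝ} (hv : Function.Injective v) :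
    univ.image (rk v) = Finset.Icc 1 (n+1) := by
  apply Finset.eq_of_subset_of_card_le
  · intro m hm
    simp only [mem_image, mem_univ, true_and] at hm
    obtain ⟨j, rfl⟩ := hm
    simp only [Finset.mem_Icc]
    refine ⟨Finset.card_pos.mpr ⟨j, by simp⟩, ?_⟩
    calc rk v j ≤ (univ : Finset (Fin (n+1))).card := Finset.card_filter_le _ _
      _ = n+1 := by simp
  · rw [Nat.card_Icc, Finset.card_image_of_injective _ (rk_inj hv)]
    simp

lemma rk_count {n : ℕ} {v : Fin (n+1) → ℝ} (hv : Function.Injective v) {k : ℕ}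
    (hk : k ≤ n+1) :
    (univ.filter fun j => rk v j ≤ k).card = k := by
  have h1 : (univ.filter fun j => rk v j ≤ k).card
      = ((univ.image (rk v)).filter (· ≤ k)).card := by
    rw [Finset.filter_image, Finset.card_image_of_injective _ (rk_inj hv)]
  rw [h1, rk_image hv]
  have h2 : (Finset.Icc 1 (n+1)).filter (· ≤ k) = Finset.Icc 1 k := by
    ext m
    simp only [Finset.mem_filter, Finset.mem_Icc]
    omega
  rw [h2, Nat.card_Icc]
  omega

lemma measurable_rk {n : ℕ} (j : Fin (n+1)) :
    Measurable fun v : Fin (n+1) → ℝ => rk v j := by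
  unfold rk
  simp_rw [Finset.card_filter]
  apply Finset.measurable_sum
  intro i _
  exact Measurable.ite (measurableSet_le (measurable_pi_apply i) (measurable_pi_apply j))
    measurable_const measurable_const

lemma rk_comp_perm {n : ℕ} (v : Fin (n+1) → ℝ) (σ : Equiv.Perm (Fin (n+1))) (j : Fin (n+1)) :
    rk (v ∘ σ) j = rk v (σ j) := by
  unfold rk
  apply Finset.card_bij (fun i _ => σ i)
  · intro i hi; simp only [mem_filter, mem_univ, true_and, Function.comp_apply] at hi ⊢; exact hi
  · intro a _ b _ h; exact σ.injective h
  · intro b hb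
    refine ⟨σ.symm b, ?_, by simp⟩
    simp only [mem_filter, mem_univ, true_and, Function.comp_apply, Equiv.apply_symm_apply] at hb ⊢
    exact hb

lemma rank_last {n : ℕ} (v : Fin (n+1) → ℝ) :
    1 + (univ.filter fun i : Fin n => v i.castSucc ≤ v (Fin.last n)).card
      = rk v (Fin.last n) := by
  unfold rk
  have hnot : Fin.last n ∉ (univ.image Fin.castSucc : Finset (Fin (n+1))).filter
      (fun i => v i ≤ v (Fin.last n)) := by
    simp only [mem_filter, mem_image, mem_univ, true_and, not_and]
    intro ⟨i, hi⟩
    exact absurd hi (Fin.castSucc_lt_last i).ne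
  have huniv : (univ : Finset (Fin (n+1))) = insert (Fin.last n) (univ.image Fin.castSucc) := by
    ext i
    simp only [mem_univ, mem_insert, mem_image, true_iff, true_and]
    rcases Fin.eq_castSucc_or_eq_last i with ⟨j, rfl⟩ | rfl
    · exact Or.inr ⟨j, rfl⟩
    · exact Or.inl rfl
  rw [huniv, Finset.filter_insert, if_pos le_rfl,
    Finset.card_insert_of_notMem hnot, Finset.filter_image,
    Finset.card_image_of_injective _ (Fin.castSucc_injective n), add_comm]

end ConformalAux
open MeasureTheory
open scoped ENNReal

/-- Conformal rank lemma: for exchangeable random variables with a.s. no ties,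
the rank of `Z_{n+1}` among `Z_1, ..., Z_{n+1}` is at most `⌈β(n+1)⌉` with
probability at least `β`. -/
theorem conformal_rank_coverage
    {Ω : Type*} [MeasurableSpace Ω] (μ : Measure Ω) [IsProbabilityMeasure μ]
    (n : ℕ) (Z : Fin (n + 1) → Ω → ℝ) (hZ : ∀ i, Measurable (Z i))
    (hexch : ∀ σ : Equiv.Perm (Fin (n + 1)),
      Measure.map (fun ω => fun i => Z (σ i) ω) μ
        = Measure.map (fun ω => fun i => Z i ω) μ)
    (hties : ∀ i j, i ≠ j → μ {ω | Z i ω = Z j ω} = 0)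
    (β : ℝ) (hβ : β ∈ Set.Ioo (0 : ℝ) 1) :
    ENNReal.ofReal β ≤
      μ {ω | 1 + (Finset.univ.filter
          fun i : Fin n => Z i.castSucc ω ≤ Z (Fin.last n) ω).card
        ≤ ⌈β * (n + 1)⌉₊} := by
  obtain ⟨hβ0, hβ1⟩ := hβ
  set k := ⌈β * (n + 1)⌉₊ with hkdef
  have hkle : k ≤ n + 1 := by
    rw [hkdef, Nat.ceil_le]
    push_cast
    nlinarith
  have hβk : β * (n + 1) ≤ (k : ℝ) := Nat.le_ceil _
  set F : Ω → (Fin (n + 1) → ℝ) := fun ω i => Z i ω with hFdef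
  have hFmeas : Measurable F := measurable_pi_lambda _ hZ
  set A : Fin (n + 1) → Set Ω := fun j => {ω | ConformalAux.rk (F ω) j ≤ k} with hAdef
  have hAmeas : ∀ j, MeasurableSet (A j) := by
    intro j
    exact ((ConformalAux.measurable_rk j).comp hFmeas)
      (show MeasurableSet {m : ℕ | m ≤ k} from trivial)
  have hSmeas : MeasurableSet {v : Fin (n + 1) → ℝ | ConformalAux.rk v (Fin.last n) ≤ k} :=
    (ConformalAux.measurable_rk (Fin.last n))
      (show MeasurableSet {m : ℕ | m ≤ k} from trivial)
  -- all ranks equally likely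
  have hAeq : ∀ j, μ (A j) = μ (A (Fin.last n)) := by
    intro j
    set σ := Equiv.swap j (Fin.last n) with hσdef
    have hσ : σ (Fin.last n) = j := Equiv.swap_apply_right _ _
    have h1 : A j = (fun ω => fun i => Z (σ i) ω) ⁻¹'
        {v | ConformalAux.rk v (Fin.last n) ≤ k} := by
      ext ω
      simp only [hAdef, Set.mem_preimage, Set.mem_setOf_eq]
      have : (fun i => Z (σ i) ω) = (F ω) ∘ σ := rfl
      rw [this, ConformalAux.rk_comp_perm, hσ]
    have h2 : A (Fin.last n) = F ⁻¹' {v | ConformalAux.rk v (Fin.last n) ≤ k} := rfl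
    have hmσ : Measurable fun ω => fun i => Z (σ i) ω :=
      measurable_pi_lambda _ fun i => hZ _
    rw [h1, h2, ← Measure.map_apply hmσ hSmeas, ← Measure.map_apply hFmeas hSmeas, hexch σ]
  -- a.e. injectivity
  have hgood : ∀ᵐ ω ∂μ, Function.Injective (F ω) := by
    have h : ∀ᵐ ω ∂μ, ∀ i j : Fin (n + 1), i ≠ j → Z i ω ≠ Z j ω := by
      rw [ae_all_iff]
      intro i
      rw [ae_all_iff]
      intro j
      by_cases hij : i = j
      · filter_upwards with ω h; exact absurd hij h
      · have := hties i j hij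
        rw [ae_iff]
        convert this using 2
        ext ω
        simp [hij]
    filter_upwards [h] with ω hω
    intro a b hab
    by_contra hne
    exact hω a b hne hab
  -- a.e. the count of small ranks is k
  have hcount : ∀ᵐ ω ∂μ,
      ∑ j, Set.indicator (A j) (fun _ => (1 : ℝ≥0∞)) ω = (k : ℝ≥0∞) := by
    filter_upwards [hgood] with ω hω
    have : ∀ j, Set.indicator (A j) (fun _ => (1 : ℝ≥0∞)) ω
        = if ConformalAux.rk (F ω) j ≤ k then 1 else 0 := by
      intro j
      simp [Set.indicator_apply, hAdef]
    simp_rw [this]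
    classical
    rw [Finset.sum_boole, ConformalAux.rk_count hω hkle]
  have hsum : ∑ j, μ (A j) = (k : ℝ≥0∞) := by
    have h1 : ∀ j, μ (A j) = ∫⁻ ω, Set.indicator (A j) (fun _ => (1 : ℝ≥0∞)) ω ∂μ := by
      intro j
      rw [lintegral_indicator (hAmeas j)]
      simp
    simp_rw [h1]
    rw [← lintegral_finset_sum]
    · rw [lintegral_congr_ae hcount, lintegral_const, measure_univ, mul_one]
    · intro j _
      exact (measurable_const.indicator (hAmeas j))
  have hsum2 : (n + 1 : ℝ≥0∞) * μ (A (Fin.last n)) = (k : ℝ≥0∞) := by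
    rw [← hsum, Finset.sum_congr rfl fun j _ => hAeq j]
    simp [Finset.sum_const, Finset.card_univ, nsmul_eq_mul]
  have hn0 : ((n : ℝ≥0∞) + 1) ≠ 0 := by simp
  have hnt : ((n : ℝ≥0∞) + 1) ≠ ⊤ := by
    simp [ENNReal.add_ne_top]
  have hval : μ (A (Fin.last n)) = (k : ℝ≥0∞) / (n + 1 : ℝ≥0∞) :=
    (ENNReal.eq_div_iff hn0 hnt).mpr hsum2
  have hsetEq : {ω | 1 + (Finset.univ.filter
      fun i : Fin n => Z i.castSucc ω ≤ Z (Fin.last n) ω).card ≤ k} = A (Fin.last n) := by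
    ext ω
    simp only [Set.mem_setOf_eq, hAdef]
    rw [← ConformalAux.rank_last (F ω)]
  rw [hsetEq, hval]
  -- final arithmetic
  rw [ENNReal.le_div_iff_mul_le (Or.inl hn0) (Or.inl hnt)]
  calc ENNReal.ofReal β * ((n : ℝ≥0∞) + 1)
      = ENNReal.ofReal β * ENNReal.ofReal ((n : ℝ) + 1) := by
        rw [ENNReal.ofReal_add (by positivity) zero_le_one]
        simp
    _ = ENNReal.ofReal (β * ((n : ℝ) + 1)) := by
        rw [ENNReal.ofReal_mul hβ0.le]
    _ ≤ ENNReal.ofReal (k : ℝ) := ENNReal.ofReal_le_ofReal hβk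
    _ = (k : ℝ≥0∞) := ENNReal.ofReal_natCast k
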